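/- Let G be a digraph and X, Y ⊆ V(G). Then the family ℐ = { last-vertex sets of collections of pairwise vertex-disjoint X → Y paths } is the collection of independent sets of a matroid on Y. -/

import Mathlib

/-- A (directed) path given as a nonempty list of pairwise-distinct vertices
with consecutive pairs being edges of the digraph `G`. -/
def IsPathList {V : Type*} (G : V → V → Prop) (p : List V) : Prop :=
  p ≠ [] ∧ p.Nodup ∧ p.Chain' G

/-- The first vertex of the list `p` belongs to `A`. -/
def FirstIn {V : Type*} (p : List V) (A : Set V) : Prop := ∃ a ∈ A, p.head? = some a

/-- The last vertex of the list `p` belongs to `A`. -/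
def LastIn {V : Type*} (p : List V) (A : Set V) : Prop := ∃ a ∈ A, p.getLast? = some a

/-- `X` is an `(A,B)`-separator in `G`: every path of `G` starting in `A` and
ending in `B` meets `X`. -/
def IsSeparator {V : Type*} (G : V → V → Prop) (A B X : Set V) : Prop :=
  ∀ p : List V, IsPathList G p → FirstIn p A → LastIn p B → ∃ v ∈ p, v ∈ X

/-- Two lists of vertices share no vertex. -/
def ListsDisjoint {V : Type*} (p q : List V) : Prop := ∀ v, v ∈ p → v ∉ q

/-- `I` is an independent set of the gammoid `M(G,X,Y)` : `I ⊆ Y` and `I` is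
the set of last vertices of a collection of pairwise vertex-disjoint
`X → Y` paths. -/
def IsGammoidIndep {V : Type*} (G : V → V → Prop) (X Y : Set V) (I : Set V) : Prop :=
  I ⊆ Y ∧ ∃ P : V → List V,
    (∀ v ∈ I, IsPathList G (P v) ∧ FirstIn (P v) X ∧ (P v).getLast? = some v) ∧
    (∀ u ∈ I, ∀ v ∈ I, u ≠ v → ListsDisjoint (P u) (P v))

namespace GammoidProof
open List

variable {α : Type*}

lemma mem_of_getLast?_eq {l : List α} {a : α} (h : l.getLast? = some a) : a ∈ l := by
  have h2 : l.reverse.head? = some a := by rw [List.head?_reverse]; exact h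
  cases hr : l.reverse with
  | nil => rw [hr] at h2; simp at h2
  | cons c cs =>
      rw [hr] at h2; simp at h2
      have : a ∈ l.reverse := by rw [hr]; simp [h2]
      simpa using this

lemma mem_of_head?_eq {l : List α} {a : α} (h : l.head? = some a) : a ∈ l := by
  cases l with
  | nil => simp at h
  | cons c cs => simp at h; simp [h]

lemma chain'_mono_mem {R S : α → α → Prop} :
    ∀ {l : List α}, (∀ a ∈ l, ∀ b ∈ l, R a b → S a b) → l.Chain' R → l.Chain' S
  | [], _, _ => List.isChain_nil
  | [_], _, _ => List.isChain_singleton _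
  | a :: b :: l, h, hc => by
    unfold List.Chain' at hc ⊢; rw [List.isChain_cons_cons] at hc ⊢
    refine ⟨h a (by simp) b (by simp) hc.1, chain'_mono_mem (fun x hx y hy => h x ?_ y ?_) hc.2⟩
    · exact List.mem_cons_of_mem _ hx
    · exact List.mem_cons_of_mem _ hy

open Classical in
noncomputable def firstSeg (S : Set α) : List α → List α
  | [] => []
  | a :: l => if a ∈ S then [a] else a :: firstSeg S l

lemma firstSeg_prefix (S : Set α) : ∀ l : List α, firstSeg S l <+: l
  | [] => by simp [firstSeg]
  | a :: l => by
      rw [firstSeg]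
      split
      · exact ⟨l, rfl⟩
      · obtain ⟨t, ht⟩ := firstSeg_prefix S l
        exact ⟨t, by rw [List.cons_append, ht]⟩

lemma firstSeg_head? (S : Set α) : ∀ l : List α, (firstSeg S l).head? = l.head?
  | [] => rfl
  | a :: l => by rw [firstSeg]; split <;> simp

lemma firstSeg_spec (S : Set α) :
    ∀ l : List α, (∃ x ∈ l, x ∈ S) →
      ∃ t z, firstSeg S l = t ++ [z] ∧ z ∈ S ∧ ∀ x ∈ t, x ∉ S
  | [], h => by simp at h
  | a :: l, h => by
      rw [firstSeg]
      by_cases ha : a ∈ S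
      · exact ⟨[], a, by simp [ha], ha, by simp⟩
      · have hl : ∃ x ∈ l, x ∈ S := by
          obtain ⟨x, hx, hxS⟩ := h
          rcases List.mem_cons.1 hx with rfl | hx
          · exact absurd hxS ha
          · exact ⟨x, hx, hxS⟩
        obtain ⟨t, z, h1, h2, h3⟩ := firstSeg_spec S l hl
        refine ⟨a :: t, z, by simp [ha, h1], h2, ?_⟩
        intro x hx
        rcases List.mem_cons.1 hx with rfl | hx
        · exact ha
        · exact h3 x hx

lemma firstSeg_subset (S : Set α) (l : List α) {x : α} (h : x ∈ firstSeg S l) : x ∈ l :=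
  (firstSeg_prefix S l).sublist.mem h

noncomputable def lastSeg (S : Set α) (l : List α) : List α := (firstSeg S l.reverse).reverse

lemma lastSeg_suffix (S : Set α) (l : List α) : lastSeg S l <:+ l := by
  have h := firstSeg_prefix S l.reverse
  rw [lastSeg]
  obtain ⟨t, ht⟩ := h
  exact ⟨t.reverse, by rw [← List.reverse_append, ht, List.reverse_reverse]⟩

lemma lastSeg_getLast? (S : Set α) (l : List α) : (lastSeg S l).getLast? = l.getLast? := by
  rw [lastSeg, List.getLast?_eq_head?_reverse, List.reverse_reverse, firstSeg_head?,
    ← List.getLast?_eq_head?_reverse]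

lemma lastSeg_spec (S : Set α) (l : List α) (h : ∃ x ∈ l, x ∈ S) :
    ∃ z t, lastSeg S l = z :: t ∧ z ∈ S ∧ ∀ x ∈ t, x ∉ S := by
  have h' : ∃ x ∈ l.reverse, x ∈ S := by
    obtain ⟨x, hx, hxS⟩ := h; exact ⟨x, by simpa using hx, hxS⟩
  obtain ⟨t, z, h1, h2, h3⟩ := firstSeg_spec S l.reverse h'
  refine ⟨z, t.reverse, by rw [lastSeg, h1]; simp, h2, fun x hx => h3 x (by simpa using hx)⟩

lemma lastSeg_subset (S : Set α) (l : List α) {x : α} (h : x ∈ lastSeg S l) : x ∈ l :=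
  (lastSeg_suffix S l).sublist.mem h

/-- extract a nodup path from a walk, preserving endpoints. -/
lemma exists_path_of_walk {G : α → α → Prop} :
    ∀ w : List α, w ≠ [] → w.Chain' G →
      ∃ p : List α, p ≠ [] ∧ p.Nodup ∧ p.Chain' G ∧ p.head? = w.head? ∧
        p.getLast? = w.getLast? ∧ ∀ x ∈ p, x ∈ w
  | [], h, _ => absurd rfl h
  | a :: l, _, hc => by
      by_cases ha : a ∈ l
      · obtain ⟨s, t, rfl⟩ := List.append_of_mem ha
        have hsuf : (a :: t) <:+ a :: (s ++ a :: t) := by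
          refine ⟨a :: s, rfl⟩
        have hlen : (a :: t).length < (a :: (s ++ a :: t)).length := by
          simp [Nat.lt_succ_iff]
        obtain ⟨p, h1, h2, h3, h4, h5, h6⟩ :=
          exists_path_of_walk (a :: t) (by simp) (hc.suffix hsuf)
        refine ⟨p, h1, h2, h3, by simpa using h4, ?_, fun x hx => hsuf.sublist.mem (h6 x hx)⟩
        rw [h5]
        show (a :: t).getLast? = ((a :: s) ++ (a :: t)).getLast?
        rw [List.getLast?_append_of_ne_nil _ (by simp)]
      · cases hl : l with
        | nil => exact ⟨[a], by simp, by simp, List.isChain_singleton _, by simp, by simp [hl], by simp [hl]⟩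
        | cons b m =>
          subst hl
          have hlen : (b :: m).length < (a :: b :: m).length := by simp
          obtain ⟨p, h1, h2, h3, h4, h5, h6⟩ :=
            exists_path_of_walk (b :: m) (by simp) hc.tail
          have hGab : G a b := (List.isChain_cons_cons.1 hc).1
          refine ⟨a :: p, by simp, ?_, ?_, by simp, ?_, ?_⟩
          · exact List.nodup_cons.2 ⟨fun hap => ha (h6 a hap), h2⟩
          · refine List.isChain_cons.2 ⟨?_, h3⟩
            intro y hy
            rw [h4] at hy
            simp at hy
            subst hy
            exact hGab
          · show (([a] ++ p)).getLast? = ((a :: b :: m)).getLast?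
            rw [List.getLast?_append_of_ne_nil _ h1, h5]
            show (b :: m).getLast? = ([a] ++ (b :: m)).getLast?
            rw [List.getLast?_append_of_ne_nil _ (by simp)]
          · intro x hx
            rcases List.mem_cons.1 hx with rfl | hx
            · simp
            · exact List.mem_cons_of_mem _ (h6 x hx)
  termination_by w => w.length


lemma chain'_and_ne_left {G : α → α → Prop} {u v : α} :
    ∀ (t : List α) (z : α), (t ++ [z]).Chain' G → (∀ x ∈ t, x ≠ u) →
      (t ++ [z]).Chain' (fun a b => G a b ∧ (a, b) ≠ (u, v))
  | [], z, _, _ => List.isChain_singleton _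
  | a :: t, z, hc, ht => by
      unfold List.Chain' at hc ⊢; rw [List.cons_append, List.isChain_cons] at hc ⊢
      refine ⟨fun y hy => ⟨hc.1 y hy, ?_⟩,
        chain'_and_ne_left t z hc.2 (fun x hx => ht x (by simp [hx]))⟩
      simp only [ne_eq, Prod.mk.injEq, not_and]
      intro hau
      exact absurd hau (ht a (by simp))

lemma chain'_and_ne_right {G : α → α → Prop} {u v : α} :
    ∀ (z : α) (t : List α), (z :: t).Chain' G → (∀ x ∈ t, x ≠ v) →
      (z :: t).Chain' (fun a b => G a b ∧ (a, b) ≠ (u, v))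
  | _, [], _, _ => List.isChain_singleton _
  | z, a :: t, hc, ht => by
      unfold List.Chain' at hc ⊢; rw [List.isChain_cons_cons] at hc ⊢
      refine ⟨⟨hc.1, ?_⟩, chain'_and_ne_right a t hc.2 (fun x hx => ht x (by simp [hx]))⟩
      simp only [ne_eq, Prod.mk.injEq, not_and]
      intro _ hav
      exact ht a (by simp) hav

lemma eq_map_some (p : List (Option α)) (h : none ∉ p) : ∃ l : List α, p = l.map some := by
  induction p with
  | nil => exact ⟨[], rfl⟩
  | cons a p ih =>
      cases a with
      | none => simp at h
      | some x =>
        obtain ⟨l, hl⟩ := ih (fun hc => h (List.mem_cons_of_mem _ hc))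
        exact ⟨x :: l, by simp [hl]⟩

lemma getLast?_map' {β : Type*} (f : α → β) (l : List α) :
    (l.map f).getLast? = l.getLast?.map f := by
  rw [List.getLast?_eq_head?_reverse, ← List.map_reverse, List.head?_map,
    ← List.getLast?_eq_head?_reverse]

section counting
variable [Finite α]

lemma card_le_ncard_of_meets (L : Finset (List α)) (S : Set α)
    (hmeet : ∀ p ∈ L, ∃ x ∈ p, x ∈ S)
    (hdisj : ∀ p ∈ L, ∀ q ∈ L, p ≠ q → ListsDisjoint p q) :
    L.card ≤ S.ncard := by
  classical
  letI : Fintype α := Fintype.ofFinite α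
  rw [Set.ncard_eq_toFinset_card']
  have hcards : (S.toFinset.image some).card = S.toFinset.card :=
    Finset.card_image_of_injective _ (Option.some_injective _)
  rw [← hcards]
  refine Finset.card_le_card_of_injOn (fun p => p.find? (fun x => decide (x ∈ S))) ?_ ?_
  · intro p hp
    obtain ⟨x, hxp, hxS⟩ := hmeet p hp
    have hsome : (p.find? (fun x => decide (x ∈ S))).isSome := by
      rw [List.find?_isSome]
      exact ⟨x, hxp, by simpa using hxS⟩
    obtain ⟨a, ha⟩ := Option.isSome_iff_exists.1 hsome
    show (p.find? (fun x => decide (x ∈ S))) ∈ Finset.image some S.toFinset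
    rw [ha]
    have haS : a ∈ S := by simpa using List.find?_some ha
    exact Finset.mem_image.2 ⟨a, Set.mem_toFinset.2 haS, rfl⟩
  · intro p hp q hq he
    by_contra hne
    have he' : p.find? (fun x => decide (x ∈ S)) = q.find? (fun x => decide (x ∈ S)) := he
    obtain ⟨x, hxp, hxS⟩ := hmeet p hp
    have hsome : (p.find? (fun x => decide (x ∈ S))).isSome := by
      rw [List.find?_isSome]; exact ⟨x, hxp, by simpa using hxS⟩
    obtain ⟨a, ha⟩ := Option.isSome_iff_exists.1 hsome
    have hap : a ∈ p := List.mem_of_find?_eq_some ha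
    have haq' : q.find? (fun x => decide (x ∈ S)) = some a := he'.symm.trans ha
    have haq : a ∈ q := List.mem_of_find?_eq_some haq'
    exact hdisj p hp q hq hne a hap haq

lemma lasts_surj (L : Finset (List α)) (T : Set α) (hcard : T.ncard ≤ L.card)
    (hlast : ∀ p ∈ L, ∃ b ∈ T, p.getLast? = some b)
    (hdisj : ∀ p ∈ L, ∀ q ∈ L, p ≠ q → ListsDisjoint p q) :
    ∀ b ∈ T, ∃ p ∈ L, p.getLast? = some b := by
  classical
  letI : Fintype α := Fintype.ofFinite α
  have hinj : Set.InjOn (fun p : List α => p.getLast?) L := by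
    intro p hp q hq he
    by_contra hne
    obtain ⟨b, _, hb⟩ := hlast p hp
    have he' : p.getLast? = q.getLast? := he
    have hbq : q.getLast? = some b := by rw [← he']; exact hb
    exact hdisj p hp q hq hne b (mem_of_getLast?_eq hb) (mem_of_getLast?_eq hbq)
  have hsub : (L.image (fun p => p.getLast?)) ⊆ T.toFinset.image some := by
    intro o ho
    obtain ⟨p, hp, rfl⟩ := Finset.mem_image.1 ho
    obtain ⟨b, hbT, hb⟩ := hlast p hp
    exact Finset.mem_image.2 ⟨b, Set.mem_toFinset.2 hbT, hb.symm⟩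
  have hcards : (T.toFinset.image some).card ≤ (L.image (fun p => p.getLast?)).card := by
    rw [Finset.card_image_of_injOn hinj,
      Finset.card_image_of_injective _ (Option.some_injective _), ← Set.ncard_eq_toFinset_card']
    exact hcard
  have heq := Finset.eq_of_subset_of_card_le hsub hcards
  intro b hb
  have : some b ∈ L.image (fun p => p.getLast?) := by
    rw [heq]
    exact Finset.mem_image.2 ⟨b, Set.mem_toFinset.2 hb, rfl⟩
  obtain ⟨p, hp, hpe⟩ := Finset.mem_image.1 this
  exact ⟨p, hp, hpe⟩

lemma heads_surj (L : Finset (List α)) (T : Set α) (hcard : T.ncard ≤ L.card)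
    (hhead : ∀ p ∈ L, ∃ b ∈ T, p.head? = some b)
    (hdisj : ∀ p ∈ L, ∀ q ∈ L, p ≠ q → ListsDisjoint p q) :
    ∀ b ∈ T, ∃ p ∈ L, p.head? = some b := by
  classical
  letI : Fintype α := Fintype.ofFinite α
  have hinj : Set.InjOn (fun p : List α => p.head?) L := by
    intro p hp q hq he
    by_contra hne
    obtain ⟨b, _, hb⟩ := hhead p hp
    have he' : p.head? = q.head? := he
    have hbq : q.head? = some b := by rw [← he']; exact hb
    exact hdisj p hp q hq hne b (mem_of_head?_eq hb) (mem_of_head?_eq hbq)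
  have hsub : (L.image (fun p => p.head?)) ⊆ T.toFinset.image some := by
    intro o ho
    obtain ⟨p, hp, rfl⟩ := Finset.mem_image.1 ho
    obtain ⟨b, hbT, hb⟩ := hhead p hp
    exact Finset.mem_image.2 ⟨b, Set.mem_toFinset.2 hbT, hb.symm⟩
  have hcards : (T.toFinset.image some).card ≤ (L.image (fun p => p.head?)).card := by
    rw [Finset.card_image_of_injOn hinj,
      Finset.card_image_of_injective _ (Option.some_injective _), ← Set.ncard_eq_toFinset_card']
    exact hcard
  have heq := Finset.eq_of_subset_of_card_le hsub hcards
  intro b hb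
  have : some b ∈ L.image (fun p => p.head?) := by
    rw [heq]
    exact Finset.mem_image.2 ⟨b, Set.mem_toFinset.2 hb, rfl⟩
  obtain ⟨p, hp, hpe⟩ := Finset.mem_image.1 this
  exact ⟨p, hp, hpe⟩

end counting

/-- If at most the last vertex of `p` and at most the first vertex of `q` lie in the
`A`-`B`-separator `S`, then `p` and `q` can share no vertex outside `S`. -/
lemma cross_contra {G' : α → α → Prop} {A B S : Set α}
    (hS : IsSeparator G' A B S)
    {p q : List α} (hp : IsPathList G' p) (hq : IsPathList G' q)
    (hpA : FirstIn p A) (hqB : LastIn q B)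
    (hpS : ∀ w ∈ p, w ∈ S → p.getLast? = some w)
    (hqS : ∀ w ∈ q, w ∈ S → q.head? = some w)
    {x : α} (hxp : x ∈ p) (hxq : x ∈ q) (hxS : x ∉ S) : False := by
  obtain ⟨s₁, s₂, hpdec⟩ := List.append_of_mem hxp
  obtain ⟨r₁, r₂, hqdec⟩ := List.append_of_mem hxq
  set w : List α := s₁ ++ x :: r₂ with hw
  have hchain_p : (s₁ ++ [x]).Chain' G' := by
    refine hp.2.2.prefix ?_
    rw [hpdec]
    exact ⟨s₂, by simp⟩
  have hchain_q : (x :: r₂).Chain' G' := by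
    refine hq.2.2.suffix ?_
    rw [hqdec]
    exact ⟨r₁, rfl⟩
  have hchain_w : w.Chain' G' := by
    have hweq : w = (s₁ ++ [x]) ++ r₂ := by simp [hw]
    rw [hweq]; unfold List.Chain'; rw [List.isChain_append]
    refine ⟨hchain_p, hchain_q.tail, ?_⟩
    intro a ha b hb
    rw [List.getLast?_concat] at ha
    have hax : a = x := by simpa using ha.symm
    subst hax
    exact (List.isChain_cons.1 hchain_q).1 b hb
  have hhead : w.head? = p.head? := by
    cases s₁ with
    | nil => rw [hpdec]; rfl
    | cons a t => simp [hw, hpdec]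
  have hlastw : w.getLast? = q.getLast? := by
    rw [hw, hqdec, List.getLast?_append_of_ne_nil _ (l₂ := x :: r₂) (by simp),
      List.getLast?_append_of_ne_nil _ (l₂ := x :: r₂) (by simp)]
  have havoid : ∀ y ∈ w, y ∉ S := by
    intro y hy hyS
    rcases List.mem_append.1 hy with hys₁ | hyx
    · have hyp : y ∈ p := by rw [hpdec]; exact List.mem_append_left _ hys₁
      have hlast := hpS y hyp hyS
      have hyin : y ∈ x :: s₂ := by
        have h2 : (x :: s₂).getLast? = some y := by
          rw [← List.getLast?_append_of_ne_nil s₁ (l₂ := x :: s₂) (by simp), ← hpdec]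
          exact hlast
        exact mem_of_getLast?_eq h2
      have hnd := hp.2.1
      rw [hpdec] at hnd
      exact (List.disjoint_of_nodup_append hnd) hys₁ hyin
    · rcases List.mem_cons.1 hyx with rfl | hyr₂
      · exact hxS hyS
      · have hyq : y ∈ q := by
          rw [hqdec]; exact List.mem_append_right _ (List.mem_cons_of_mem _ hyr₂)
        have hhd := hqS y hyq hyS
        have hnd := hq.2.1
        rw [hqdec] at hnd
        cases r₁ with
        | nil =>
          have hyx' : y = x := by rw [hqdec] at hhd; simp at hhd; exact hhd.symm
          subst hyx'
          simp at hnd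
          exact hnd.1 hyr₂
        | cons a t =>
          have hya : y = a := by rw [hqdec] at hhd; simp at hhd; exact hhd.symm
          subst hya
          exact (List.disjoint_of_nodup_append hnd) (by simp)
            (List.mem_cons_of_mem _ hyr₂)
  obtain ⟨pw, hpw1, hpw2, hpw3, hpw4, hpw5, hpw6⟩ :=
    exists_path_of_walk w (by simp [hw]) hchain_w
  obtain ⟨a, haA, hha⟩ := hpA
  obtain ⟨b, hbB, hhb⟩ := hqB
  obtain ⟨v, hvp, hvS⟩ := hS pw ⟨hpw1, hpw2, hpw3⟩
    ⟨a, haA, by rw [hpw4, hhead]; exact hha⟩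
    ⟨b, hbB, by rw [hpw5, hlastw]; exact hhb⟩
  exact havoid v (hpw6 v hvp) hvS

lemma eq_cons_of_head? {l : List α} {a : α} (h : l.head? = some a) : l = a :: l.tail := by
  cases l <;> simp_all

lemma menger_noedge {V : Type*} [Fintype V] (G : V → V → Prop)
    (hG : ∀ a b : V, G a b → a = b) (A B : Set V) (k : ℕ)
    (hsep : ∀ S : Set V, IsSeparator G A B S → k ≤ S.ncard) :
    ∃ L : Finset (List V), L.card = k ∧
      (∀ p ∈ L, IsPathList G p ∧ FirstIn p A ∧ LastIn p B) ∧
      (∀ p ∈ L, ∀ q ∈ L, p ≠ q → ListsDisjoint p q) := by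
  classical
  have hsingle : ∀ p : List V, IsPathList G p → ∃ c, p = [c] := by
    intro p hp
    match p, hp with
    | [], hp => exact absurd rfl hp.1
    | [c], _ => exact ⟨c, rfl⟩
    | c :: d :: l, hp =>
      have hcd : G c d := (List.isChain_cons_cons.1 hp.2.2).1
      have : c = d := hG _ _ hcd
      subst this
      have hnd := hp.2.1
      simp at hnd
  have hAB : IsSeparator G A B (A ∩ B) := by
    intro p hp hfA hlB
    obtain ⟨c, rfl⟩ := hsingle p hp
    obtain ⟨a, haA, hha⟩ := hfA
    obtain ⟨b, hbB, hhb⟩ := hlB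
    simp at hha hhb
    subst hha; subst hhb
    exact ⟨c, by simp, haA, hbB⟩
  have hk := hsep _ hAB
  obtain ⟨T, hTsub, hTcard⟩ := Set.exists_subset_card_eq hk
  have hTfin : T.Finite := Set.toFinite T
  refine ⟨hTfin.toFinset.image (fun a => [a]), ?_, ?_, ?_⟩
  · rw [Finset.card_image_of_injective _ (fun a b h => by simpa using h), ← hTcard]
    exact (Set.ncard_eq_toFinset_card T hTfin).symm
  · intro p hp
    obtain ⟨a, ha, rfl⟩ := Finset.mem_image.1 hp
    rw [Set.Finite.mem_toFinset] at ha
    have haT := hTsub ha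
    exact ⟨⟨by simp, by simp, List.isChain_singleton _⟩, ⟨a, haT.1, rfl⟩, ⟨a, haT.2, rfl⟩⟩
  · intro p hp q hq hne
    obtain ⟨a, _, rfl⟩ := Finset.mem_image.1 hp
    obtain ⟨b, _, rfl⟩ := Finset.mem_image.1 hq
    intro x hx hx'
    simp at hx hx'
    subst hx; subst hx'
    exact hne rfl

theorem menger {V : Type*} [Fintype V] :
    ∀ (n : ℕ) (G : V → V → Prop) (E : Finset (V × V)),
      (∀ a b : V, G a b → a ≠ b → (a, b) ∈ E) → E.card ≤ n →
      ∀ (A B : Set V) (k : ℕ),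
        (∀ S : Set V, IsSeparator G A B S → k ≤ S.ncard) →
        ∃ L : Finset (List V), L.card = k ∧
          (∀ p ∈ L, IsPathList G p ∧ FirstIn p A ∧ LastIn p B) ∧
          (∀ p ∈ L, ∀ q ∈ L, p ≠ q → ListsDisjoint p q)
  | 0, G, E, hGE, hcard, A, B, k, hsep => by
      refine menger_noedge G (fun a b hab => ?_) A B k hsep
      by_contra hne
      have h1 : (a, b) ∈ E := hGE a b hab hne
      rw [Finset.card_eq_zero.1 (Nat.le_zero.1 hcard)] at h1
      simp at h1
  | (n+1), G, E, hGE, hcard, A, B, k, hsep => by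
      classical
      by_cases hedge : ∃ u v : V, G u v ∧ u ≠ v
      case neg =>
        push_neg at hedge
        exact menger_noedge G (fun a b hab => hedge a b hab) A B k hsep
      obtain ⟨u, v, hGuv, huv⟩ := hedge
      set G' : V → V → Prop := fun a b => G a b ∧ (a, b) ≠ (u, v) with hG'def
      have hG'G : ∀ a b, G' a b → G a b := fun a b h => h.1
      have huvE : (u, v) ∈ E := hGE u v hGuv huv
      have hGE' : ∀ a b : V, G' a b → a ≠ b → (a, b) ∈ E.erase (u, v) := by
        intro a b h hne
        exact Finset.mem_erase.2 ⟨h.2, hGE a b h.1 hne⟩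
      have hcard' : (E.erase (u, v)).card ≤ n := by
        rw [Finset.card_erase_of_mem huvE]
        omega
      by_cases hsep' : ∀ S : Set V, IsSeparator G' A B S → k ≤ S.ncard
      · obtain ⟨L, h1, h2, h3⟩ := menger n G' (E.erase (u, v)) hGE' hcard' A B k hsep'
        refine ⟨L, h1, fun p hp => ?_, h3⟩
        obtain ⟨⟨hp1, hp2, hp3⟩, hp4, hp5⟩ := h2 p hp
        exact ⟨⟨hp1, hp2, hp3.imp hG'G⟩, hp4, hp5⟩
      · push_neg at hsep'
        obtain ⟨S, hSsep, hSk⟩ := hsep'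
        have hchainG'u : ∀ p : List V, p.Chain' G → u ∉ p → p.Chain' G' := by
          intro p hc hu
          refine chain'_mono_mem (fun a ha b hb hab => ⟨hab, ?_⟩) hc
          simp only [ne_eq, Prod.mk.injEq, not_and]
          intro hau
          exact absurd (hau ▸ ha) hu
        have hchainG'v : ∀ p : List V, p.Chain' G → v ∉ p → p.Chain' G' := by
          intro p hc hv
          refine chain'_mono_mem (fun a ha b hb hab => ⟨hab, ?_⟩) hc
          simp only [ne_eq, Prod.mk.injEq, not_and]
          intro _ hbv
          exact absurd (hbv ▸ hb) hv
        set Su : Set V := insert u S with hSudef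
        set Sv : Set V := insert v S with hSvdef
        have hSuSep : IsSeparator G A B Su := by
          intro p hp hfA hlB
          by_cases hu : u ∈ p
          · exact ⟨u, hu, Set.mem_insert _ _⟩
          · obtain ⟨x, hxp, hxS⟩ := hSsep p ⟨hp.1, hp.2.1, hchainG'u p hp.2.2 hu⟩ hfA hlB
            exact ⟨x, hxp, Set.mem_insert_of_mem _ hxS⟩
        have hSvSep : IsSeparator G A B Sv := by
          intro p hp hfA hlB
          by_cases hv : v ∈ p
          · exact ⟨v, hv, Set.mem_insert _ _⟩
          · obtain ⟨x, hxp, hxS⟩ := hSsep p ⟨hp.1, hp.2.1, hchainG'v p hp.2.2 hv⟩ hfA hlB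
            exact ⟨x, hxp, Set.mem_insert_of_mem _ hxS⟩
        have hSfin : S.Finite := Set.toFinite S
        have hkSu : k ≤ Su.ncard := hsep _ hSuSep
        have hkSv : k ≤ Sv.ncard := hsep _ hSvSep
        have huS : u ∉ S := by
          intro huS
          rw [hSudef, Set.insert_eq_self.2 huS] at hkSu
          omega
        have hvS : v ∉ S := by
          intro hvS
          rw [hSvdef, Set.insert_eq_self.2 hvS] at hkSv
          omega
        have hSucard : Su.ncard = S.ncard + 1 := Set.ncard_insert_of_notMem huS hSfin
        have hSvcard : Sv.ncard = S.ncard + 1 := Set.ncard_insert_of_notMem hvS hSfin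
        have hkeq : k = S.ncard + 1 := by omega
        have claimA : ∀ T : Set V, IsSeparator G' A Su T → IsSeparator G A B T := by
          intro T hT p hp hfA hlB
          have hmeet : ∃ x ∈ p, x ∈ Su := by
            by_cases hu : u ∈ p
            · exact ⟨u, hu, Set.mem_insert _ _⟩
            · obtain ⟨x, h1, h2⟩ := hSsep p ⟨hp.1, hp.2.1, hchainG'u p hp.2.2 hu⟩ hfA hlB
              exact ⟨x, h1, Set.mem_insert_of_mem _ h2⟩
          obtain ⟨t, z, hqeq, hzSu, htSu⟩ := firstSeg_spec Su p hmeet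
          have hqpre := firstSeg_prefix Su p
          have hqchain : (firstSeg Su p).Chain' G := hp.2.2.prefix hqpre
          have hqchain' : (firstSeg Su p).Chain' G' := by
            rw [hqeq] at hqchain ⊢
            exact chain'_and_ne_left t z hqchain
              (fun x hx hxu => htSu x hx (hxu ▸ Set.mem_insert _ _))
          obtain ⟨y, hy1, hy2⟩ := hT (firstSeg Su p)
            ⟨by rw [hqeq]; simp, hp.2.1.sublist hqpre.sublist, hqchain'⟩
            (by
              obtain ⟨a, h1, h2⟩ := hfA
              exact ⟨a, h1, by rw [firstSeg_head?]; exact h2⟩)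
            ⟨z, hzSu, by rw [hqeq]; exact List.getLast?_concat⟩
          exact ⟨y, firstSeg_subset Su p hy1, hy2⟩
        have claimB : ∀ T : Set V, IsSeparator G' Sv B T → IsSeparator G A B T := by
          intro T hT p hp hfA hlB
          have hmeet : ∃ x ∈ p, x ∈ Sv := by
            by_cases hv : v ∈ p
            · exact ⟨v, hv, Set.mem_insert _ _⟩
            · obtain ⟨x, h1, h2⟩ := hSsep p ⟨hp.1, hp.2.1, hchainG'v p hp.2.2 hv⟩ hfA hlB
              exact ⟨x, h1, Set.mem_insert_of_mem _ h2⟩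
          obtain ⟨z, t, hreq, hzSv, htSv⟩ := lastSeg_spec Sv p hmeet
          have hrsuf := lastSeg_suffix Sv p
          have hrchain : (lastSeg Sv p).Chain' G := hp.2.2.suffix hrsuf
          have hrchain' : (lastSeg Sv p).Chain' G' := by
            rw [hreq] at hrchain ⊢
            exact chain'_and_ne_right z t hrchain
              (fun x hx hxv => htSv x hx (hxv ▸ Set.mem_insert _ _))
          obtain ⟨y, hy1, hy2⟩ := hT (lastSeg Sv p)
            ⟨by rw [hreq]; simp, hp.2.1.sublist hrsuf.sublist, hrchain'⟩
            ⟨z, hzSv, by rw [hreq]; rfl⟩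
            (by
              obtain ⟨b, h1, h2⟩ := hlB
              exact ⟨b, h1, by rw [lastSeg_getLast?]; exact h2⟩)
          exact ⟨y, lastSeg_subset Sv p hy1, hy2⟩
        obtain ⟨L₁', hL₁'card, hL₁'path, hL₁'disj⟩ :=
          menger n G' (E.erase (u, v)) hGE' hcard' A Su k (fun T hT => hsep T (claimA T hT))
        have hGE'' : ∀ a b : V, (flip G') a b → a ≠ b →
            (a, b) ∈ (E.erase (u, v)).image Prod.swap := by
          intro a b h hne
          exact Finset.mem_image.2 ⟨(b, a), hGE' b a h hne.symm, rfl⟩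
        have hcard'' : ((E.erase (u, v)).image Prod.swap).card ≤ n :=
          le_trans Finset.card_image_le hcard'
        have hsepflip : ∀ T : Set V, IsSeparator (flip G') B Sv T → k ≤ T.ncard := by
          intro T hT
          refine hsep T (claimB T ?_)
          intro p hp hfSv hlB
          have hrev : ∃ y ∈ p.reverse, y ∈ T := by
            refine hT p.reverse ⟨by simp [hp.1], by simp [hp.2.1], ?_⟩ ?_ ?_
            · exact List.isChain_reverse.2 hp.2.2
            · obtain ⟨b, h1, h2⟩ := hlB
              exact ⟨b, h1, by rw [List.head?_reverse]; exact h2⟩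
            · obtain ⟨a, h1, h2⟩ := hfSv
              exact ⟨a, h1, by rw [List.getLast?_eq_head?_reverse, List.reverse_reverse]; exact h2⟩
          obtain ⟨y, hy1, hy2⟩ := hrev
          exact ⟨y, by simpa using hy1, hy2⟩
        obtain ⟨L₂'', hL₂''card, hL₂''path, hL₂''disj⟩ :=
          menger n (flip G') ((E.erase (u, v)).image Prod.swap) hGE'' hcard'' B Sv k hsepflip
        -- reverse the flipped system to get G'-paths from Sv to B
        set L₂' : Finset (List V) := L₂''.image List.reverse with hL₂'def
        have hL₂'card : L₂'.card = k := by
          rw [hL₂'def, Finset.card_image_of_injective _ List.reverse_injective]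
          exact hL₂''card
        have hL₂'path : ∀ q ∈ L₂', IsPathList G' q ∧ FirstIn q Sv ∧ LastIn q B := by
          intro q hq
          obtain ⟨q₀, hq₀, rfl⟩ := Finset.mem_image.1 hq
          obtain ⟨⟨h1, h2, h3⟩, h4, h5⟩ := hL₂''path q₀ hq₀
          refine ⟨⟨by simp [h1], by simp [h2], List.isChain_reverse.2 h3⟩, ?_, ?_⟩
          · obtain ⟨a, ha, ha2⟩ := h5
            exact ⟨a, ha, by rw [List.head?_reverse]; exact ha2⟩
          · obtain ⟨a, ha, ha2⟩ := h4
            exact ⟨a, ha, by rw [List.getLast?_eq_head?_reverse, List.reverse_reverse]; exact ha2⟩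
        have hL₂'disj : ∀ p ∈ L₂', ∀ q ∈ L₂', p ≠ q → ListsDisjoint p q := by
          intro p hp q hq hne x hxp hxq
          obtain ⟨p₀, hp₀, rfl⟩ := Finset.mem_image.1 hp
          obtain ⟨q₀, hq₀, rfl⟩ := Finset.mem_image.1 hq
          exact hL₂''disj p₀ hp₀ q₀ hq₀ (fun h => hne (by rw [h])) x
            (by simpa using hxp) (by simpa using hxq)
        -- truncate the A→Su system at the first hit of Su
        set L₁ : Finset (List V) := L₁'.image (firstSeg Su) with hL₁def
        have hL₁mem : ∀ p ∈ L₁, ∃ p₀, p₀ ∈ L₁' ∧ p = firstSeg Su p₀ := by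
          intro p hp
          obtain ⟨p₀, h, rfl⟩ := Finset.mem_image.1 hp
          exact ⟨p₀, h, rfl⟩
        have hmeet₁ : ∀ p₀ ∈ L₁', ∃ x ∈ p₀, x ∈ Su := by
          intro p₀ h
          obtain ⟨-, -, z, hz, hz2⟩ := hL₁'path p₀ h
          exact ⟨z, mem_of_getLast?_eq hz2, hz⟩
        have hL₁prop : ∀ p ∈ L₁, IsPathList G' p ∧ FirstIn p A ∧
            ∃ t z, p = t ++ [z] ∧ z ∈ Su ∧ (∀ x ∈ t, x ∉ Su) ∧ p.getLast? = some z := by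
          intro p hp
          obtain ⟨p₀, hp₀, rfl⟩ := hL₁mem p hp
          obtain ⟨hpath₀, hA₀, -⟩ := hL₁'path p₀ hp₀
          obtain ⟨t, z, heq, hz, ht⟩ := firstSeg_spec Su p₀ (hmeet₁ p₀ hp₀)
          have hpre := firstSeg_prefix Su p₀
          refine ⟨⟨by rw [heq]; simp, hpath₀.2.1.sublist hpre.sublist, hpath₀.2.2.prefix hpre⟩,
            ?_, t, z, heq, hz, ht, by rw [heq]; exact List.getLast?_concat⟩
          obtain ⟨a, h1, h2⟩ := hA₀
          exact ⟨a, h1, by rw [firstSeg_head?]; exact h2⟩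
        have hL₁disj : ∀ p ∈ L₁, ∀ q ∈ L₁, p ≠ q → ListsDisjoint p q := by
          intro p hp q hq hne x hxp hxq
          obtain ⟨p₀, hp₀, rfl⟩ := hL₁mem p hp
          obtain ⟨q₀, hq₀, rfl⟩ := hL₁mem q hq
          exact hL₁'disj p₀ hp₀ q₀ hq₀ (fun h => hne (by rw [h])) x
            (firstSeg_subset _ _ hxp) (firstSeg_subset _ _ hxq)
        have hL₁card : L₁.card = k := by
          rw [hL₁def, Finset.card_image_of_injOn, hL₁'card]
          intro p₀ hp₀ q₀ hq₀ he
          by_contra hne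
          have hp₀' : p₀ ∈ L₁' := hp₀
          have hq₀' : q₀ ∈ L₁' := hq₀
          have h₀ : p₀ ≠ [] := (hL₁'path p₀ hp₀').1.1
          obtain ⟨a, ha⟩ : ∃ a, p₀.head? = some a := by
            cases hc : p₀ with
            | nil => exact absurd hc h₀
            | cons b l => exact ⟨b, rfl⟩
          have hap : a ∈ firstSeg Su p₀ := mem_of_head?_eq (by rw [firstSeg_head?]; exact ha)
          have haq : a ∈ firstSeg Su q₀ := by rw [← he]; exact hap
          exact hL₁'disj p₀ hp₀' q₀ hq₀' hne a (firstSeg_subset _ _ hap) (firstSeg_subset _ _ haq)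
        have hL₁lastB : ∀ p ∈ L₁, ∃ b ∈ Su, p.getLast? = some b := by
          intro p hp
          obtain ⟨-, -, t, z, -, hz, -, hzl⟩ := hL₁prop p hp
          exact ⟨z, hz, hzl⟩
        have hL₁ends := lasts_surj L₁ Su (by rw [hL₁card]; omega) hL₁lastB hL₁disj
        -- truncate the Sv→B system at the last hit of Sv
        set L₂ : Finset (List V) := L₂'.image (lastSeg Sv) with hL₂def
        have hL₂mem : ∀ q ∈ L₂, ∃ q₀, q₀ ∈ L₂' ∧ q = lastSeg Sv q₀ := by
          intro q hq
          obtain ⟨q₀, h, rfl⟩ := Finset.mem_image.1 hq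
          exact ⟨q₀, h, rfl⟩
        have hmeet₂ : ∀ q₀ ∈ L₂', ∃ x ∈ q₀, x ∈ Sv := by
          intro q₀ h
          obtain ⟨-, ⟨z, hz, hz2⟩, -⟩ := hL₂'path q₀ h
          exact ⟨z, mem_of_head?_eq hz2, hz⟩
        have hL₂prop : ∀ q ∈ L₂, IsPathList G' q ∧ LastIn q B ∧
            ∃ z t, q = z :: t ∧ z ∈ Sv ∧ (∀ x ∈ t, x ∉ Sv) ∧ q.head? = some z := by
          intro q hq
          obtain ⟨q₀, hq₀, rfl⟩ := hL₂mem q hq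
          obtain ⟨hpath₀, -, hB₀⟩ := hL₂'path q₀ hq₀
          obtain ⟨z, t, heq, hz, ht⟩ := lastSeg_spec Sv q₀ (hmeet₂ q₀ hq₀)
          have hsuf := lastSeg_suffix Sv q₀
          refine ⟨⟨by rw [heq]; simp, hpath₀.2.1.sublist hsuf.sublist, hpath₀.2.2.suffix hsuf⟩,
            ?_, z, t, heq, hz, ht, by rw [heq]; rfl⟩
          obtain ⟨b, h1, h2⟩ := hB₀
          exact ⟨b, h1, by rw [lastSeg_getLast?]; exact h2⟩
        have hL₂disj : ∀ p ∈ L₂, ∀ q ∈ L₂, p ≠ q → ListsDisjoint p q := by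
          intro p hp q hq hne x hxp hxq
          obtain ⟨p₀, hp₀, rfl⟩ := hL₂mem p hp
          obtain ⟨q₀, hq₀, rfl⟩ := hL₂mem q hq
          exact hL₂'disj p₀ hp₀ q₀ hq₀ (fun h => hne (by rw [h])) x
            (lastSeg_subset _ _ hxp) (lastSeg_subset _ _ hxq)
        have hL₂card : L₂.card = k := by
          rw [hL₂def, Finset.card_image_of_injOn, hL₂'card]
          intro p₀ hp₀ q₀ hq₀ he
          by_contra hne
          have hp₀' : p₀ ∈ L₂' := hp₀
          have hq₀' : q₀ ∈ L₂' := hq₀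
          have h₀ : p₀ ≠ [] := (hL₂'path p₀ hp₀').1.1
          obtain ⟨b, hb, hb2⟩ := (hL₂'path p₀ hp₀').2.2
          have hbp : b ∈ lastSeg Sv p₀ := mem_of_getLast?_eq (by rw [lastSeg_getLast?]; exact hb2)
          have hbq : b ∈ lastSeg Sv q₀ := by rw [← he]; exact hbp
          exact hL₂'disj p₀ hp₀' q₀ hq₀' hne b (lastSeg_subset _ _ hbp) (lastSeg_subset _ _ hbq)
        have hL₂headSv : ∀ q ∈ L₂, ∃ b ∈ Sv, q.head? = some b := by
          intro q hq
          obtain ⟨-, -, z, t, -, hz, -, hzh⟩ := hL₂prop q hq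
          exact ⟨z, hz, hzh⟩
        have hL₂heads := heads_surj L₂ Sv (by rw [hL₂card]; omega) hL₂headSv hL₂disj
        -- the crossing lemma
        have hcross : ∀ p ∈ L₁, ∀ q ∈ L₂, ∀ x, x ∈ p → x ∈ q →
            x ∈ S ∧ p.getLast? = some x ∧ q.head? = some x := by
          intro p hp q hq x hxp hxq
          obtain ⟨hppath, hpA, t₁, z₁, hpdec, hz₁, ht₁, hplast⟩ := hL₁prop p hp
          obtain ⟨hqpath, hqB, z₂, t₂, hqdec, hz₂, ht₂, hqhead⟩ := hL₂prop q hq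
          have hpS : ∀ w ∈ p, w ∈ S → p.getLast? = some w := by
            intro w hw hwS
            rw [hpdec] at hw
            rcases List.mem_append.1 hw with h | h
            · exact absurd (Set.mem_insert_of_mem _ hwS) (ht₁ w h)
            · simp at h
              subst h
              exact hplast
          have hqS : ∀ w ∈ q, w ∈ S → q.head? = some w := by
            intro w hw hwS
            rw [hqdec] at hw
            rcases List.mem_cons.1 hw with h | h
            · subst h
              exact hqhead
            · exact absurd (Set.mem_insert_of_mem _ hwS) (ht₂ w h)
          by_cases hxS : x ∈ S
          · exact ⟨hxS, hpS x hxp hxS, hqS x hxq hxS⟩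
          · exact (cross_contra hSsep hppath hqpath hpA hqB hpS hqS hxp hxq hxS).elim
        -- choose partners
        have hΦex : ∀ s ∈ Sv, ∃ q, q ∈ L₂ ∧ q.head? = some s := by
          intro s hs
          obtain ⟨q, h1, h2⟩ := hL₂heads s hs
          exact ⟨q, h1, h2⟩
        choose! Φ hΦ1 hΦ2 using hΦex
        -- glue
        set glue : List V → List V := fun p =>
          match p.getLast? with
          | none => []
          | some z => if z ∈ S then p ++ (Φ z).tail else p ++ Φ v
          with hgluedef
        have hglue_eq : ∀ (p : List V) (z : V), p.getLast? = some z →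
            glue p = if z ∈ S then p ++ (Φ z).tail else p ++ Φ v := by
          intro p z h
          simp only [hgluedef, h]
        have hpartner : ∀ p ∈ L₁, ∃ q, q ∈ L₂ ∧
            ((p.getLast? = some u ∧ q.head? = some v ∧ glue p = p ++ q) ∨
             (∃ z ∈ S, p.getLast? = some z ∧ q.head? = some z ∧ glue p = p ++ q.tail)) := by
          intro p hp
          obtain ⟨-, -, t₁, z₁, hpdec, hz₁, ht₁, hplast⟩ := hL₁prop p hp
          by_cases hzS : z₁ ∈ S
          · exact ⟨Φ z₁, hΦ1 z₁ (Set.mem_insert_of_mem _ hzS),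
              Or.inr ⟨z₁, hzS, hplast, hΦ2 z₁ (Set.mem_insert_of_mem _ hzS),
                by rw [hglue_eq p z₁ hplast, if_pos hzS]⟩⟩
          · have hz₁u : z₁ = u := by
              rcases Set.mem_insert_iff.1 hz₁ with h | h
              · exact h
              · exact absurd h hzS
            subst hz₁u
            exact ⟨Φ v, hΦ1 v (Set.mem_insert _ _),
              Or.inl ⟨hplast, hΦ2 v (Set.mem_insert _ _),
                by rw [hglue_eq p z₁ hplast, if_neg hzS]⟩⟩
        -- main properties of glued paths
        have hglue_main : ∀ p ∈ L₁,
            IsPathList G (glue p) ∧ FirstIn (glue p) A ∧ LastIn (glue p) B ∧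
            (glue p).head? = p.head? := by
          intro p hp
          obtain ⟨hppath, hpA, t₁, z₁, hpdec, hz₁, ht₁, hplast⟩ := hL₁prop p hp
          obtain ⟨q, hq, hcase⟩ := hpartner p hp
          obtain ⟨hqpath, hqB, z₂, t₂, hqdec, hz₂, ht₂, hqhead⟩ := hL₂prop q hq
          have hpne : p ≠ [] := hppath.1
          rcases hcase with ⟨hpu, hqv, hglueeq⟩ | ⟨z, hzS, hpz, hqz, hglueeq⟩
          · -- u-type : glue p = p ++ q
            have hqne : q ≠ [] := hqpath.1
            have hdisj_pq : List.Disjoint p q := by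
              intro x hxp hxq
              obtain ⟨hxS, hxl, -⟩ := hcross p hp q hq x hxp hxq
              have hxu : u = x := Option.some_injective _ (hpu.symm.trans hxl)
              exact huS (hxu ▸ hxS)
            rw [hglueeq]
            refine ⟨⟨by simp [hpne], List.nodup_append.2 ⟨hppath.2.1, hqpath.2.1, fun a ha b hb hab => hdisj_pq ha (hab ▸ hb)⟩, ?_⟩,
              ?_, ?_, ?_⟩
            · unfold List.Chain'; rw [List.isChain_append]
              refine ⟨hppath.2.2.imp hG'G, hqpath.2.2.imp hG'G, ?_⟩
              intro a ha b hb
              have ha' : p.getLast? = some a := ha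
              have hb' : q.head? = some b := hb
              have hau : u = a := Option.some_injective _ (hpu.symm.trans ha')
              have hbv : v = b := Option.some_injective _ (hqv.symm.trans hb')
              rw [← hau, ← hbv]
              exact hGuv
            · obtain ⟨a, h1, h2⟩ := hpA
              exact ⟨a, h1, by rw [List.head?_append_of_ne_nil _ hpne]; exact h2⟩
            · obtain ⟨b, h1, h2⟩ := hqB
              exact ⟨b, h1, by rw [List.getLast?_append_of_ne_nil _ hqne]; exact h2⟩
            · exact List.head?_append_of_ne_nil _ hpne
          · -- S-type : glue p = p ++ q.tail
            have hz₂z : z₂ = z := Option.some_injective _ (hqhead.symm.trans hqz)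
            subst hz₂z
            have hz₁z : z₁ = z₂ := Option.some_injective _ (hplast.symm.trans hpz)
            subst hz₁z
            have hqtail : q.tail = t₂ := by rw [hqdec]; rfl
            have hznott₂ : z₁ ∉ t₂ := by
              have hnd := hqpath.2.1
              rw [hqdec] at hnd
              exact (List.nodup_cons.1 hnd).1
            have hdisj_pt : List.Disjoint p q.tail := by
              intro x hxp hxt
              rw [hqtail] at hxt
              have hxq : x ∈ q := by rw [hqdec]; exact List.mem_cons_of_mem _ hxt
              obtain ⟨-, -, hxh⟩ := hcross p hp q hq x hxp hxq
              have hzx : z₁ = x := Option.some_injective _ (hqz.symm.trans hxh)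
              exact hznott₂ (hzx ▸ hxt)
            rw [hglueeq]
            refine ⟨⟨by simp [hpne],
              List.nodup_append.2 ⟨hppath.2.1, hqpath.2.1.sublist (List.tail_sublist q),
                fun a ha b hb hab => hdisj_pt ha (hab ▸ hb)⟩, ?_⟩, ?_, ?_, ?_⟩
            · unfold List.Chain'; rw [List.isChain_append]
              refine ⟨hppath.2.2.imp hG'G, (hqpath.2.2.tail).imp hG'G, ?_⟩
              intro a ha b hb
              have ha' : p.getLast? = some a := ha
              have hb' : q.tail.head? = some b := hb
              have hau : z₁ = a := Option.some_injective _ (hpz.symm.trans ha')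
              have hchq := hqpath.2.2
              rw [hqdec] at hchq
              have hedge := (List.isChain_cons.1 hchq).1 b (by rw [← hqtail]; exact hb')
              rw [← hau]
              exact hG'G _ _ hedge
            · obtain ⟨a, h1, h2⟩ := hpA
              exact ⟨a, h1, by rw [List.head?_append_of_ne_nil _ hpne]; exact h2⟩
            · cases ht₂' : t₂ with
              | nil =>
                obtain ⟨b, hbB, hbl⟩ := hqB
                have hqz₁ : q = [z₁] := by rw [hqdec, ht₂']
                have hbz : z₁ = b := by
                  rw [hqz₁] at hbl
                  simpa using hbl
                refine ⟨z₁, hbz ▸ hbB, ?_⟩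
                rw [hqtail, ht₂', List.append_nil]
                exact hpz
              | cons c m =>
                obtain ⟨b, hbB, hbl⟩ := hqB
                refine ⟨b, hbB, ?_⟩
                rw [List.getLast?_append_of_ne_nil _ (by rw [hqtail, ht₂']; simp), hqtail]
                rw [hqdec] at hbl
                rw [show z₁ :: t₂ = [z₁] ++ t₂ from rfl,
                  List.getLast?_append_of_ne_nil _ (by rw [ht₂']; simp)] at hbl
                exact hbl
            · exact List.head?_append_of_ne_nil _ hpne
        -- cross-disjointness helpers
        have hmemq : ∀ pp qq, pp ∈ L₁ → qq ∈ L₂ → ∀ y, y ∈ pp → y ∈ qq.tail → False := by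
          intro pp qq hpp hqq y hyp hyt
          have hyq : y ∈ qq := List.mem_of_mem_tail hyt
          obtain ⟨-, -, hyh⟩ := hcross pp hpp qq hqq y hyp hyq
          have hqqnd := (hL₂prop qq hqq).1.2.1
          have hcons := eq_cons_of_head? hyh
          rw [hcons] at hqqnd
          exact (List.nodup_cons.1 hqqnd).1 hyt
        have hmemq2 : ∀ pp qq, pp ∈ L₁ → qq ∈ L₂ → qq.head? = some v →
            ∀ y, y ∈ pp → y ∈ qq → False := by
          intro pp qq hpp hqq hqv y hyp hyq
          obtain ⟨hyS, -, hyh⟩ := hcross pp hpp qq hqq y hyp hyq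
          have hvy : v = y := Option.some_injective _ (hqv.symm.trans hyh)
          exact hvS (hvy ▸ hyS)
        have hgluedisj : ∀ p ∈ L₁, ∀ p' ∈ L₁, p ≠ p' → ListsDisjoint (glue p) (glue p') := by
          intro p hp p' hp' hne x hx hx'
          obtain ⟨q, hq, hcase⟩ := hpartner p hp
          obtain ⟨q', hq', hcase'⟩ := hpartner p' hp'
          rcases hcase with ⟨hpu, hqv, hgl⟩ | ⟨z, hzS, hpz, hqz, hgl⟩ <;>
            rcases hcase' with ⟨hpu', hqv', hgl'⟩ | ⟨z', hzS', hpz', hqz', hgl'⟩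
          · -- u-u : both p, p' end at u, impossible
            exact hL₁disj p hp p' hp' hne u (mem_of_getLast?_eq hpu) (mem_of_getLast?_eq hpu')
          · -- u-S
            rw [hgl] at hx
            rw [hgl'] at hx'
            rcases List.mem_append.1 hx with h1 | h1 <;> rcases List.mem_append.1 hx' with h2 | h2
            · exact hL₁disj p hp p' hp' hne x h1 h2
            · exact hmemq p q' hp hq' x h1 h2
            · exact hmemq2 p' q hp' hq hqv x h2 h1
            · have hneq : q ≠ q' := by
                intro hqq
                rw [hqq] at hqv
                have := Option.some_injective _ (hqv.symm.trans hqz')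
                exact hvS (this ▸ hzS')
              exact hL₂disj q hq q' hq' hneq x h1 (List.mem_of_mem_tail h2)
          · -- S-u
            rw [hgl] at hx
            rw [hgl'] at hx'
            rcases List.mem_append.1 hx with h1 | h1 <;> rcases List.mem_append.1 hx' with h2 | h2
            · exact hL₁disj p hp p' hp' hne x h1 h2
            · exact hmemq2 p q' hp hq' hqv' x h1 h2
            · exact hmemq p' q hp' hq x h2 h1
            · have hneq : q ≠ q' := by
                intro hqq
                rw [hqq] at hqz
                have := Option.some_injective _ (hqz.symm.trans hqv')
                exact hvS (this ▸ hzS)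
              exact hL₂disj q hq q' hq' hneq x (List.mem_of_mem_tail h1) h2
          · -- S-S
            rw [hgl] at hx
            rw [hgl'] at hx'
            rcases List.mem_append.1 hx with h1 | h1 <;> rcases List.mem_append.1 hx' with h2 | h2
            · exact hL₁disj p hp p' hp' hne x h1 h2
            · exact hmemq p q' hp hq' x h1 h2
            · exact hmemq p' q hp' hq x h2 h1
            · by_cases hqq : q = q'
              · subst hqq
                have hzz : z = z' := Option.some_injective _ (hqz.symm.trans hqz')
                subst hzz
                exact hL₁disj p hp p' hp' hne z (mem_of_getLast?_eq hpz) (mem_of_getLast?_eq hpz')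
              · exact hL₂disj q hq q' hq' hqq x (List.mem_of_mem_tail h1) (List.mem_of_mem_tail h2)
        refine ⟨L₁.image glue, ?_, ?_, ?_⟩
        · rw [Finset.card_image_of_injOn, hL₁card]
          intro p hp p' hp' he
          by_contra hne
          have h4 := (hglue_main p hp).2.2.2
          have hpne : p ≠ [] := ((hL₁prop p hp).1).1
          obtain ⟨a, ha⟩ : ∃ a, p.head? = some a := by
            cases hc : p with
            | nil => exact absurd hc hpne
            | cons b l => exact ⟨b, rfl⟩
          have hag : a ∈ glue p := mem_of_head?_eq (by rw [h4]; exact ha)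
          have hag' : a ∈ glue p' := by rw [← he]; exact hag
          exact hgluedisj p hp p' hp' hne a hag hag'
        · intro r hr
          obtain ⟨p, hp, rfl⟩ := Finset.mem_image.1 hr
          exact ⟨(hglue_main p hp).1, (hglue_main p hp).2.1, (hglue_main p hp).2.2.1⟩
        · intro r hr r' hr' hne
          obtain ⟨p, hp, rfl⟩ := Finset.mem_image.1 hr
          obtain ⟨p', hp', rfl⟩ := Finset.mem_image.1 hr'
          exact hgluedisj p hp p' hp' (fun h => hne (by rw [h]))




lemma gammoid_aug {V : Type*} [Fintype V] (G : V → V → Prop) (X Y : Set V)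
    {I J : Set V} (hI : IsGammoidIndep G X Y I) (hJ : IsGammoidIndep G X Y J)
    (hlt : I.ncard < J.ncard) :
    ∃ e ∈ J, e ∉ I ∧ IsGammoidIndep G X Y (insert e I) := by
  classical
  obtain ⟨hIY, P, hP1, hP2⟩ := hI
  obtain ⟨hJY, Q, hQ1, hQ2⟩ := hJ
  set G' : Option V → Option V → Prop := fun a b =>
    (∃ x y, a = some x ∧ b = some y ∧ G x y) ∨ (∃ x, a = some x ∧ b = none ∧ x ∈ J \ I)
    with hG'def
  have hG'none : ∀ b, ¬ G' none b := by
    rintro b (⟨x, y, hx, -, -⟩ | ⟨x, hx, -, -⟩) <;> simp at hx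
  have hG'ss : ∀ x y : V, G' (some x) (some y) ↔ G x y := by
    intro x y
    constructor
    · rintro (⟨a, b, ha, hb, h⟩ | ⟨a, -, hb, -⟩)
      · simp at ha hb
        subst ha; subst hb
        exact h
      · simp at hb
    · intro h
      exact Or.inl ⟨x, y, rfl, rfl, h⟩
  have hG'sn : ∀ x : V, G' (some x) none ↔ x ∈ J \ I := by
    intro x
    constructor
    · rintro (⟨a, b, -, hb, -⟩ | ⟨a, ha, -, h⟩)
      · simp at hb
      · simp at ha
        subst ha
        exact h
    · intro h
      exact Or.inr ⟨x, rfl, rfl, h⟩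
  set A' : Set (Option V) := some '' X with hA'def
  set B' : Set (Option V) := insert none (some '' I) with hB'def
  have hmapchain : ∀ l : List V, l.Chain' G → (l.map some).Chain' G' := by
    intro l hl
    unfold List.Chain'; rw [List.isChain_map]
    exact hl.imp (fun a b h => (hG'ss a b).2 h)
  have hmappath : ∀ v ∈ I, IsPathList G' ((P v).map some) ∧ FirstIn ((P v).map some) A' ∧
      ((P v).map some).getLast? = some (some v) := by
    intro v hv
    obtain ⟨⟨hne, hnd, hch⟩, hfX, hlv⟩ := hP1 v hv
    refine ⟨⟨by simp [hne], hnd.map (Option.some_injective V), hmapchain _ hch⟩, ?_, ?_⟩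
    · obtain ⟨a, haX, ha⟩ := hfX
      exact ⟨some a, ⟨a, haX, rfl⟩, by rw [List.head?_map, ha]; rfl⟩
    · rw [getLast?_map', hlv]
      rfl
  have hB'fin : (some '' I : Set (Option V)).Finite := Set.toFinite _
  have hB'card : B'.ncard = I.ncard + 1 := by
    rw [hB'def, Set.ncard_insert_of_notMem (by simp) hB'fin,
      Set.ncard_image_of_injective _ (Option.some_injective V)]
  -- the key separator bound
  have hsepbound : ∀ S' : Set (Option V), IsSeparator G' A' B' S' → I.ncard + 1 ≤ S'.ncard := by
    intro S' hS'
    by_cases hnone : none ∈ S'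
    · -- the I-linkage must meet S' \ {none}
      have hmeets : ∀ v ∈ I, ∃ s, s ∈ S' ∧ s ≠ none ∧ ∃ w ∈ P v, s = some w := by
        intro v hv
        obtain ⟨hpath, hfirst, hlast⟩ := hmappath v hv
        obtain ⟨s, hs1, hs2⟩ := hS' _ hpath hfirst
          ⟨some v, Set.mem_insert_of_mem _ ⟨v, hv, rfl⟩, hlast⟩
        obtain ⟨w, hw, rfl⟩ := List.mem_map.1 hs1
        exact ⟨some w, hs2, by simp, w, hw, rfl⟩
      choose! f hf1 hf2 hf3 using hmeets
      have hIcard : I.ncard ≤ (S' \ {none}).ncard := by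
        rw [Set.ncard_eq_toFinset_card', Set.ncard_eq_toFinset_card']
        refine Finset.card_le_card_of_injOn f ?_ ?_
        · intro v hv
          simp only [Finset.mem_coe, Set.mem_toFinset] at hv ⊢
          exact ⟨hf1 v hv, by simpa using hf2 v hv⟩
        · intro v hv v' hv' he
          have hv2 : v ∈ I := by simpa using hv
          have hv2' : v' ∈ I := by simpa using hv'
          clear hv hv'
          rename' hv2 => hv, hv2' => hv'
          by_contra hne
          obtain ⟨w, hw, hfw⟩ := hf3 v hv
          obtain ⟨w', hw', hfw'⟩ := hf3 v' hv'
          have : (some w : Option V) = some w' := by rw [← hfw, he, hfw']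
          have hww : w = w' := Option.some_injective _ this
          exact hP2 v hv v' hv' hne w hw (hww ▸ hw')
      have := Set.ncard_diff_singleton_add_one hnone (Set.toFinite S')
      omega
    · -- the J-linkage must meet S', all at non-none vertices
      have hmeets : ∀ w ∈ J, ∃ s, s ∈ S' ∧ ∃ x ∈ Q w, s = some x := by
        intro w hw
        obtain ⟨⟨hne, hnd, hch⟩, hfX, hlw⟩ := hQ1 w hw
        by_cases hwI : w ∈ I
        · obtain ⟨s, hs1, hs2⟩ := hS' ((Q w).map some)
            ⟨by simp [hne], hnd.map (Option.some_injective V), hmapchain _ hch⟩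
            (by
              obtain ⟨a, haX, ha⟩ := hfX
              exact ⟨some a, ⟨a, haX, rfl⟩, by rw [List.head?_map, ha]; rfl⟩)
            ⟨some w, Set.mem_insert_of_mem _ ⟨w, hwI, rfl⟩, by rw [getLast?_map', hlw]; rfl⟩
          obtain ⟨x, hx, rfl⟩ := List.mem_map.1 hs1
          exact ⟨some x, hs2, x, hx, rfl⟩
        · have hmapne : (Q w).map some ≠ [] := by simp [hne]
          have hchainful : ((Q w).map some ++ [none]).Chain' G' := by
            unfold List.Chain'; rw [List.isChain_append]
            refine ⟨hmapchain _ hch, by simp, ?_⟩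
            intro a ha b hb
            have ha' : ((Q w).map some).getLast? = some a := ha
            rw [getLast?_map', hlw] at ha'
            have hb' : ([none] : List (Option V)).head? = some b := hb
            simp at ha' hb'
            subst hb'
            rw [← ha', hG'sn]
            exact ⟨hw, hwI⟩
          obtain ⟨s, hs1, hs2⟩ := hS' ((Q w).map some ++ [none])
            ⟨by simp, List.nodup_append.2 ⟨hnd.map (Option.some_injective V), by simp,
                by intro a ha b hb hab; simp at hb; subst hb; subst hab; simp at ha⟩, hchainful⟩
            (by
              obtain ⟨a, haX, ha⟩ := hfX
              exact ⟨some a, ⟨a, haX, rfl⟩,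
                by rw [List.head?_append_of_ne_nil _ hmapne, List.head?_map, ha]; rfl⟩)
            ⟨none, Set.mem_insert _ _, List.getLast?_concat⟩
          rcases List.mem_append.1 hs1 with h | h
          · obtain ⟨x, hx, rfl⟩ := List.mem_map.1 h
            exact ⟨some x, hs2, x, hx, rfl⟩
          · simp at h
            subst h
            exact absurd hs2 hnone
      choose! f hf1 hf2 using hmeets
      have hJcard : J.ncard ≤ S'.ncard := by
        rw [Set.ncard_eq_toFinset_card', Set.ncard_eq_toFinset_card']
        refine Finset.card_le_card_of_injOn f ?_ ?_
        · intro w hw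
          simp only [Finset.mem_coe, Set.mem_toFinset] at hw ⊢
          exact hf1 w hw
        · intro w hw w' hw' he
          have hw2 : w ∈ J := by simpa using hw
          have hw2' : w' ∈ J := by simpa using hw'
          clear hw hw'
          rename' hw2 => hw, hw2' => hw'
          by_contra hne
          obtain ⟨x, hx, hfx⟩ := hf2 w hw
          obtain ⟨x', hx', hfx'⟩ := hf2 w' hw'
          have : (some x : Option V) = some x' := by rw [← hfx, he, hfx']
          have hxx : x = x' := Option.some_injective _ this
          exact hQ2 w hw w' hw' hne x hx (hxx ▸ hx')
      omega
  -- apply Menger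
  obtain ⟨L, hLcard, hLpath, hLdisj⟩ := menger (Finset.univ : Finset (Option V × Option V)).card
    G' Finset.univ (fun _ _ _ _ => Finset.mem_univ _) le_rfl A' B' (I.ncard + 1) hsepbound
  have hLlast : ∀ p ∈ L, ∃ b ∈ B', p.getLast? = some b := by
    intro p hp
    exact (hLpath p hp).2.2
  have hLends := lasts_surj L B' (by rw [hLcard, hB'card]) hLlast hLdisj
  -- the path ending at `none`
  obtain ⟨p₀, hp₀L, hp₀last⟩ := hLends none (Set.mem_insert _ _)
  obtain ⟨⟨hp₀ne, hp₀nd, hp₀ch⟩, hp₀A, -⟩ := hLpath p₀ hp₀L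
  have hp₀dec : p₀.dropLast ++ [none] = p₀ := List.dropLast_append_getLast? none hp₀last
  set r : List (Option V) := p₀.dropLast with hrdef
  have hrne : r ≠ [] := by
    intro hr
    rw [hr] at hp₀dec
    obtain ⟨a, ⟨x, -, hax⟩, ha⟩ := hp₀A
    rw [← hp₀dec] at ha
    simp at ha
    rw [← ha] at hax
    simp at hax
  have hrnone : none ∉ r := by
    intro hmem
    have := hp₀nd
    rw [← hp₀dec] at this
    exact (List.disjoint_of_nodup_append this) hmem (by simp)
  obtain ⟨rt, hrt⟩ := eq_map_some r hrnone
  have hrchain : r.Chain' G' := hp₀ch.prefix ⟨[none], hp₀dec⟩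
  have hjoin : ∃ y : V, r.getLast? = some (some y) ∧ y ∈ J \ I := by
    have hch := hp₀ch
    rw [← hp₀dec] at hch; unfold List.Chain' at hch; rw [List.isChain_append] at hch
    obtain ⟨a, ha⟩ : ∃ a, r.getLast? = some a := by
      cases hc : r with
      | nil => exact absurd hc hrne
      | cons b l => exact ⟨(b :: l).getLast (by simp), List.getLast?_eq_getLast _⟩
    have hedge := hch.2.2 a ha none rfl
    have hanone : a ≠ none := by
      intro h
      rw [h] at hedge
      exact hG'none _ hedge
    obtain ⟨y, rfl⟩ := Option.ne_none_iff_exists'.1 hanone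
    exact ⟨y, ha, (hG'sn y).1 hedge⟩
  obtain ⟨y, hrlast, hyJI⟩ := hjoin
  have hrtpath : IsPathList G rt ∧ FirstIn rt X ∧ rt.getLast? = some y := by
    refine ⟨⟨?_, ?_, ?_⟩, ?_, ?_⟩
    · intro h
      rw [h] at hrt
      exact hrne (by rw [hrt]; rfl)
    · have h2 := hp₀nd.sublist (List.dropLast_sublist p₀)
      rw [← hrdef, hrt] at h2
      exact h2.of_map _
    · have := hrchain
      rw [hrt] at this; unfold List.Chain' at this; rw [List.isChain_map] at this
      exact this.imp (fun a b h => (hG'ss a b).1 h)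
    · obtain ⟨a, ⟨x, hxX, hax⟩, ha⟩ := hp₀A
      subst hax
      have hh : r.head? = some (some x) := by
        rw [← List.head?_append_of_ne_nil r (l₂ := [none]) hrne, hp₀dec]
        exact ha
      rw [hrt, List.head?_map] at hh
      refine ⟨x, hxX, ?_⟩
      cases hc : rt.head? with
      | none => rw [hc] at hh; simp at hh
      | some b => rw [hc] at hh; simp at hh; rw [hh]
    · have := hrlast
      rw [hrt, getLast?_map'] at this
      cases hc : rt.getLast? with
      | none => rw [hc] at this; simp at this
      | some b => rw [hc] at this; simp at this; rw [this]
  -- the paths ending in I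
  have hpick : ∀ i ∈ I, ∃ l : List V, (l.map some) ∈ L ∧ IsPathList G l ∧ FirstIn l X ∧
      l.getLast? = some i := by
    intro i hi
    obtain ⟨p, hpL, hplast⟩ := hLends (some i) (Set.mem_insert_of_mem _ ⟨i, hi, rfl⟩)
    obtain ⟨⟨hne, hnd, hch⟩, hpA, -⟩ := hLpath p hpL
    have hnonep : none ∉ p := by
      intro hmem
      obtain ⟨s, t, hst⟩ := List.append_of_mem hmem
      cases t with
      | nil =>
        rw [hst] at hplast
        rw [List.getLast?_concat] at hplast
        simp at hplast
      | cons c m =>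
        have := hch.suffix (⟨s, hst.symm⟩ : (none :: c :: m) <:+ p)
        exact hG'none c (List.isChain_cons_cons.1 this).1
    obtain ⟨l, rfl⟩ := eq_map_some p hnonep
    refine ⟨l, hpL, ⟨by intro h; rw [h] at hne; exact hne rfl, hnd.of_map _, ?_⟩, ?_, ?_⟩
    · unfold List.Chain' at hch; rw [List.isChain_map] at hch
      exact hch.imp (fun a b h => (hG'ss a b).1 h)
    · obtain ⟨a, ⟨x, hxX, hax⟩, ha⟩ := hpA
      subst hax
      rw [List.head?_map] at ha
      refine ⟨x, hxX, ?_⟩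
      cases hc : l.head? with
      | none => rw [hc] at ha; simp at ha
      | some b => rw [hc] at ha; simp at ha; rw [ha]
    · rw [getLast?_map'] at hplast
      cases hc : l.getLast? with
      | none => rw [hc] at hplast; simp at hplast
      | some b => rw [hc] at hplast; simp at hplast; rw [hplast]
  choose! R hR1 hR2 hR3 hR4 using hpick
  have hyI : y ∉ I := hyJI.2
  refine ⟨y, hyJI.1, hyI, ?_⟩
  refine ⟨?_, Function.update R y rt, ?_, ?_⟩
  · intro w hw
    rcases Set.mem_insert_iff.1 hw with rfl | hw
    · exact hJY hyJI.1
    · exact hIY hw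
  · intro w hw
    rcases Set.mem_insert_iff.1 hw with rfl | hwI
    · rw [Function.update_self]
      exact ⟨hrtpath.1, hrtpath.2.1, hrtpath.2.2⟩
    · rw [Function.update_of_ne (fun h : w = y => hyI (h ▸ hwI))]
      exact ⟨hR2 w hwI, hR3 w hwI, hR4 w hwI⟩
  · intro w hw w' hw' hne x hx hx'
    have key : ∀ a ∈ insert y I, ∀ b ∈ insert y I, a ≠ b → ∀ z,
        z ∈ Function.update R y rt a → z ∈ Function.update R y rt b → False := by
      intro a ha b hb hab z hza hzb
      -- translate membership to Option-level lists in L (or p₀)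
      have hmem : ∀ c ∈ insert y I, ∀ z₁, z₁ ∈ Function.update R y rt c →
          ∃ pc, pc ∈ L ∧ (some z₁) ∈ pc ∧
            pc.getLast? = some (if c = y then none else some c) := by
        intro c hc z₁ hz₁
        by_cases hcy : c = y
        · subst hcy
          rw [Function.update_self] at hz₁
          rw [if_pos rfl]
          refine ⟨p₀, hp₀L, ?_, hp₀last⟩
          have : some z₁ ∈ r := by rw [hrt]; exact List.mem_map_of_mem hz₁
          exact (List.dropLast_sublist p₀).mem this
        · rw [Function.update_of_ne hcy] at hz₁
          rw [if_neg hcy]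
          have hcI : c ∈ I := by
            rcases Set.mem_insert_iff.1 hc with h | h
            · exact absurd h hcy
            · exact h
          exact ⟨(R c).map some, hR1 c hcI, List.mem_map_of_mem hz₁,
            by rw [getLast?_map', hR4 c hcI]; rfl⟩
      obtain ⟨pa, hpaL, hzpa, hpalast⟩ := hmem a ha z hza
      obtain ⟨pb, hpbL, hzpb, hpblast⟩ := hmem b hb z hzb
      have hpab : pa ≠ pb := by
        intro h
        rw [h, hpblast] at hpalast
        have := Option.some_injective _ hpalast
        by_cases hay : a = y <;> by_cases hby : b = y
        · exact hab (hay.trans hby.symm)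
        · rw [if_pos hay, if_neg hby] at this; simp at this
        · rw [if_neg hay, if_pos hby] at this; simp at this
        · rw [if_neg hay, if_neg hby] at this
          exact hab ((Option.some_injective _ this).symm)
      exact hLdisj pa hpaL pb hpbL hpab (some z) hzpa hzpb
    exact key w hw w' hw' hne x hx hx'

end GammoidProof

/-- The family of sink-sets of collections of pairwise vertex-disjoint
`X → Y` paths in a digraph `G` is the family of independent sets of a matroid
on `Y` (the gammoid `M(G,X,Y)`). -/
theorem gammoid_matroid {V : Type*} [Fintype V]
    (G : V → V → Prop) (X Y : Set V) :
    ∃ M : Matroid V, M.E = Y ∧ ∀ I : Set V, M.Indep I ↔ IsGammoidIndep G X Y I := by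
  classical
  refine ⟨(IndepMatroid.ofFinite (Set.toFinite Y) (IsGammoidIndep G X Y) ?_ ?_ ?_ ?_).matroid,
    ?_, fun I => ?_⟩
  · exact ⟨Set.empty_subset Y, fun _ => [],
      fun v hv => absurd hv (Set.notMem_empty v),
      fun u hu => absurd hu (Set.notMem_empty u)⟩
  · intro I J hJ hIJ
    obtain ⟨hJY, P, h1, h2⟩ := hJ
    exact ⟨hIJ.trans hJY, P, fun v hv => h1 v (hIJ hv),
      fun u hu v hv h => h2 u (hIJ hu) v (hIJ hv) h⟩
  · intro I J hI hJ hlt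
    exact GammoidProof.gammoid_aug G X Y hI hJ hlt
  · exact fun I hI => hI.1
  · rfl
  · rw [IndepMatroid.matroid_indep_iff]
    exact Iff.rfl
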